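/- Let K be a field and let (p₁₂, p₁₃, p₁₄, p₂₃, p₂₄, p₃₄) ∈ K⁶ be a nonzero sextuple satisfying the Plücker relation p₁₂·p₃₄ − p₁₃·p₂₄ + p₁₄·p₂₃ = 0. Then there exists a 2×4 matrix A over K whose 2×2 minors satisfy M_{ij}(A) = p_{ij} for all 1 ≤ i < j ≤ 4. -/

import Mathlib

/-- Any nonzero sextuple over a field satisfying the Plücker relation
`p₁₂p₃₄ − p₁₃p₂₄ + p₁₄p₂₃ = 0` is the sextuple of 2×2 minors of some
2×4 matrix. -/
theorem plucker_sextuple_is_minors {K : Type*} [Field K]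
    (p12 p13 p14 p23 p24 p34 : K)
    (hne : ¬(p12 = 0 ∧ p13 = 0 ∧ p14 = 0 ∧ p23 = 0 ∧ p24 = 0 ∧ p34 = 0))
    (hpl : p12 * p34 - p13 * p24 + p14 * p23 = 0) :
    ∃ A : Matrix (Fin 2) (Fin 4) K,
      A 0 0 * A 1 1 - A 0 1 * A 1 0 = p12 ∧
      A 0 0 * A 1 2 - A 0 2 * A 1 0 = p13 ∧
      A 0 0 * A 1 3 - A 0 3 * A 1 0 = p14 ∧
      A 0 1 * A 1 2 - A 0 2 * A 1 1 = p23 ∧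
      A 0 1 * A 1 3 - A 0 3 * A 1 1 = p24 ∧
      A 0 2 * A 1 3 - A 0 3 * A 1 2 = p34 := by
  by_cases h12 : p12 = 0
  · subst h12
    by_cases h13 : p13 = 0
    · subst h13
      by_cases h14 : p14 = 0
      · subst h14
        by_cases h23 : p23 = 0
        · subst h23
          by_cases h24 : p24 = 0
          · subst h24
            by_cases h34 : p34 = 0
            · exact absurd ⟨rfl, rfl, rfl, rfl, rfl, h34⟩ hne
            · exact ⟨!![0, 0, 1, 0; 0, 0, 0, p34], by simp⟩
          · refine ⟨!![0, 1, p34/p24, 0; 0, 0, 0, p24], ?_, ?_, ?_, ?_, ?_, ?_⟩ <;>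
              simp <;> field_simp
        · refine ⟨!![0, 1, 0, -p34/p23; 0, 0, p23, p24], ?_, ?_, ?_, ?_, ?_, ?_⟩ <;>
            simp <;> field_simp <;> ring
      · have h23 : p23 = 0 := by
          simp at hpl
          rcases hpl with h | h
          · exact absurd h h14
          · exact h
        subst h23
        refine ⟨!![1, p24/p14, p34/p14, 0; 0, 0, 0, p14], ?_, ?_, ?_, ?_, ?_, ?_⟩ <;>
          simp <;> field_simp <;> ring
    · refine ⟨!![1, p23/p13, 0, -p34/p13; 0, 0, p13, p14], ?_, ?_, ?_, ?_, ?_, ?_⟩ <;>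
        simp
      · field_simp
      · field_simp <;> linear_combination hpl
      · field_simp <;> ring
  · refine ⟨!![1, 0, -p23/p12, -p24/p12; 0, p12, p13, p14], ?_, ?_, ?_, ?_, ?_, ?_⟩ <;>
      simp
    · field_simp <;> ring
    · field_simp <;> ring
    · field_simp <;> linear_combination -hpl
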